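/- Let B be an n×n matrix with all entries nonnegative. If there exists a vector λ ∈ ℝ^n with all entries strictly positive such that every entry of λᵀ(B − I) is strictly negative, then the spectral radius of B is strictly less than 1. -/

import Mathlib

open Matrix NormedSpace

/-- For a nonnegative matrix `B`, if `lᵀ(B - I) < 0` componentwise for some strictly
positive `l`, then the spectral radius of `B` is less than 1. -/
theorem nonneg_copositive_schur (n : ℕ) (B : Matrix (Fin n) (Fin n) ℝ)
    (hB : ∀ i j, 0 ≤ B i j)
    (h : ∃ l : Fin n → ℝ, (∀ i, 0 < l i) ∧ ∀ j, Matrix.vecMul l (B - 1) j < 0) :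
    ∀ μ ∈ spectrum ℂ (B.map (algebraMap ℝ ℂ)), ‖μ‖ < 1 := by
  obtain ⟨l, hl, hlB⟩ := h
  intro μ hμ
  -- extract an eigenvector
  rw [← AlgEquiv.spectrum_eq (Matrix.toLinAlgEquiv (Pi.basisFun ℂ (Fin n))),
    ← Module.End.hasEigenvalue_iff_mem_spectrum] at hμ
  obtain ⟨v, hv, hv0⟩ := hμ.exists_hasEigenvector
  rw [Module.End.mem_eigenspace_iff] at hv
  have hmv : ∀ i, (B.map (algebraMap ℝ ℂ)).mulVec v i = μ * v i := by
    intro i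
    have h2 : Matrix.toLin' (B.map (algebraMap ℝ ℂ)) v = μ • v := by
      rw [← Matrix.toLin_eq_toLin']; exact hv
    have := congrFun h2 i
    rwa [Matrix.toLin'_apply, Pi.smul_apply, smul_eq_mul] at this
  set w : Fin n → ℝ := fun i => ‖v i‖ with hw
  have hwpos : ∀ i, 0 ≤ w i := fun i => norm_nonneg _
  obtain ⟨k, hk⟩ : ∃ k, v k ≠ 0 := by
    by_contra hc
    push_neg at hc
    exact hv0 (funext hc)
  have hwk : 0 < w k := by simpa [hw] using norm_pos_iff.mpr hk
  -- key inequality: |μ| * w i ≤ ∑ j, B i j * w j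
  have key : ∀ i, ‖μ‖ * w i ≤ ∑ j, B i j * w j := by
    intro i
    have : ‖μ‖ * w i = ‖∑ j, (B i j : ℂ) * v j‖ := by
      rw [hw]
      simp only [← norm_mul]
      congr 1
      rw [← hmv i]
      simp [Matrix.mulVec, dotProduct, Matrix.map_apply, mul_comm]
    rw [this]
    calc ‖∑ j, (B i j : ℂ) * v j‖ ≤ ∑ j, ‖(B i j : ℂ) * v j‖ :=
          norm_sum_le _ _
      _ = ∑ j, B i j * w j := by
          refine Finset.sum_congr rfl fun j _ => ?_
          rw [norm_mul, Complex.norm_real, Real.norm_eq_abs, abs_of_nonneg (hB i j)]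
  -- sum against l
  have hvecB : ∀ j, Matrix.vecMul l B j < l j := by
    intro j
    have := hlB j
    rwa [Matrix.vecMul_sub, Pi.sub_apply, Matrix.vecMul_one, sub_neg] at this

  set S : ℝ := ∑ j, l j * w j with hS
  have hSpos : 0 < S := by
    apply Finset.sum_pos' (fun j _ => mul_nonneg (hl j).le (hwpos j))
    exact ⟨k, Finset.mem_univ k, mul_pos (hl k) hwk⟩
  have step1 : ‖μ‖ * S ≤ ∑ j, Matrix.vecMul l B j * w j := by
    have : ‖μ‖ * S = ∑ i, l i * (‖μ‖ * w i) := by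
      rw [hS, Finset.mul_sum]
      exact Finset.sum_congr rfl fun i _ => by ring
    rw [this]
    calc ∑ i, l i * (‖μ‖ * w i) ≤ ∑ i, l i * ∑ j, B i j * w j := by
          refine Finset.sum_le_sum fun i _ => ?_
          exact mul_le_mul_of_nonneg_left (key i) (hl i).le
      _ = ∑ j, Matrix.vecMul l B j * w j := by
          simp only [Finset.mul_sum, Matrix.vecMul, dotProduct, Finset.sum_mul]
          rw [Finset.sum_comm]
          exact Finset.sum_congr rfl fun j _ => Finset.sum_congr rfl fun i _ => by ring
  have step2 : ∑ j, Matrix.vecMul l B j * w j < S := by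
    rw [hS]
    apply Finset.sum_lt_sum
    · exact fun j _ => mul_le_mul_of_nonneg_right (hvecB j).le (hwpos j)
    · exact ⟨k, Finset.mem_univ k, mul_lt_mul_of_pos_right (hvecB k) hwk⟩
  have : ‖μ‖ * S < 1 * S := by
    rw [one_mul]; exact lt_of_le_of_lt step1 step2
  exact lt_of_mul_lt_mul_right this hSpos.le
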